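/- Let r ≥ 3 be an integer. For every natural number N there exists a continuous map f : Δ_N → ℝ^3 such that there do NOT exist pairwise disjoint subsets S_1, …, S_r of the vertex set {0,…,N} with |S_1| = 2, |S_2| = 3, |S_i| = 4 for 3 ≤ i ≤ r, together with points x_1, …, x_r ∈ Δ_N with the support of x_i contained in S_i for all i and f(x_1) = f(x_2) = ⋯ = f(x_r). In particular, the r-tuple (1, 2, 3, …, 3) is not Tverberg prescribable for r and d = 3. -/

import Mathlib

open Finset

noncomputable section

def TvG (N : ℕ) (x : Fin (N+1) → ℝ) : ℝ := ∑ v : Fin (N+1), ((v:ℕ):ℝ) * x v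

def TvCode (N : ℕ) (a b : Fin (N+1)) : ℕ := (a:ℕ) * (N+1) + (b:ℕ)

def TvB (N : ℕ) : ℝ := ((N:ℝ)+1)^2

def TvH (N : ℕ) (x : Fin (N+1) → ℝ) : ℝ :=
  ∑ u : Fin (N+1), ∑ v : Fin (N+1), if u < v then (((v:ℕ):ℝ) - ((u:ℕ):ℝ))^2 * (TvB N)^(TvCode N u v) * (x u * x v) else 0

def TvE (N : ℕ) (x : Fin (N+1) → ℝ) : ℝ :=
  ∑ u : Fin (N+1), ∑ v : Fin (N+1), ∑ w : Fin (N+1),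
    if u < v ∧ v < w then x u * x v * x w else 0

lemma TvB_one_le (N : ℕ) : 1 ≤ TvB N := by
  have h : (0:ℝ) ≤ (N:ℝ) := Nat.cast_nonneg N
  unfold TvB; nlinarith

lemma TvB_pos (N : ℕ) : 0 < TvB N := lt_of_lt_of_le one_pos (TvB_one_le N)

lemma TvB_gt (N : ℕ) : ((N:ℝ))^2 < TvB N := by
  have h : (0:ℝ) ≤ (N:ℝ) := Nat.cast_nonneg N
  unfold TvB; nlinarith

/-- injectivity of the code on pairs -/
lemma TvCode_inj {N : ℕ} {a b a' b' : Fin (N+1)}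
    (h : TvCode N a b = TvCode N a' b') : a = a' ∧ b = b' := by
  unfold TvCode at h
  have hb : (b:ℕ) ≤ N := Fin.is_le b
  have hb' : (b':ℕ) ≤ N := Fin.is_le b'
  have hbb : (b:ℕ) = (b':ℕ) := by
    have h1 : ((a:ℕ) * (N+1) + (b:ℕ)) % (N+1) = (b:ℕ) := by
      rw [Nat.mul_comm, Nat.mul_add_mod]; exact Nat.mod_eq_of_lt b.isLt
    have h2 : ((a':ℕ) * (N+1) + (b':ℕ)) % (N+1) = (b':ℕ) := by
      rw [Nat.mul_comm, Nat.mul_add_mod]; exact Nat.mod_eq_of_lt b'.isLt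
    rw [← h1, ← h2, h]
  have haa : (a:ℕ) = (a':ℕ) := by
    have hN : 0 < N + 1 := Nat.succ_pos N
    have : (a:ℕ) * (N+1) = (a':ℕ) * (N+1) := by omega
    exact Nat.eq_of_mul_eq_mul_right hN this
  exact ⟨Fin.ext haa, Fin.ext hbb⟩

/-- continuity of the three coordinate functions, as functions on the simplex -/
lemma TvG_cont (N : ℕ) : Continuous fun x : stdSimplex ℝ (Fin (N+1)) => TvG N x.1 := by
  unfold TvG
  exact continuous_finset_sum _ fun v _ =>
    continuous_const.mul ((continuous_apply v).comp continuous_subtype_val)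

lemma TvH_cont (N : ℕ) : Continuous fun x : stdSimplex ℝ (Fin (N+1)) => TvH N x.1 := by
  unfold TvH
  refine continuous_finset_sum _ fun u _ => continuous_finset_sum _ fun v _ => ?_
  by_cases h : u < v
  · simp only [h, if_true]
    exact continuous_const.mul
      (((continuous_apply u).comp continuous_subtype_val).mul
        ((continuous_apply v).comp continuous_subtype_val))
  · simp only [h, if_false]; exact continuous_const

lemma TvE_cont (N : ℕ) : Continuous fun x : stdSimplex ℝ (Fin (N+1)) => TvE N x.1 := by
  unfold TvE
  refine continuous_finset_sum _ fun u _ => continuous_finset_sum _ fun v _ =>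
    continuous_finset_sum _ fun w _ => ?_
  by_cases h : u < v ∧ v < w
  · simp only [h, if_true]
    exact (((continuous_apply u).comp continuous_subtype_val).mul
        ((continuous_apply v).comp continuous_subtype_val)).mul
        ((continuous_apply w).comp continuous_subtype_val)
  · simp only [h, if_false]; exact continuous_const

/-- If the support has at most 2 elements then TvE vanishes. -/
lemma TvE_zero {N : ℕ} {x : Fin (N+1) → ℝ} {s : Finset (Fin (N+1))}
    (hs : ∀ v, x v ≠ 0 → v ∈ s) (hcard : s.card ≤ 2) : TvE N x = 0 := by
  unfold TvE
  refine Finset.sum_eq_zero fun u _ => Finset.sum_eq_zero fun v _ =>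
    Finset.sum_eq_zero fun w _ => ?_
  split_ifs with h
  · by_contra hne
    have hu : x u ≠ 0 := fun h0 => hne (by rw [h0]; ring)
    have hv : x v ≠ 0 := fun h0 => hne (by rw [h0]; ring)
    have hw : x w ≠ 0 := fun h0 => hne (by rw [h0]; ring)
    have hsub : ({u, v, w} : Finset (Fin (N+1))) ⊆ s := by
      intro z hz
      simp only [Finset.mem_insert, Finset.mem_singleton] at hz
      rcases hz with rfl | rfl | rfl
      exacts [hs _ hu, hs _ hv, hs _ hw]
    have hcard3 : ({u, v, w} : Finset (Fin (N+1))).card = 3 := by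
      rw [Finset.card_insert_of_notMem, Finset.card_insert_of_notMem, Finset.card_singleton]
      · simp only [Finset.mem_singleton]; exact (h.2.ne)
      · simp only [Finset.mem_insert, Finset.mem_singleton]
        push_neg
        exact ⟨h.1.ne, (h.1.trans h.2).ne⟩
    have := Finset.card_le_card hsub
    omega
  · rfl

/-- If x is nonnegative and TvE x = 0 then the support has at most two elements. -/
lemma TvE_supp {N : ℕ} {x : Fin (N+1) → ℝ} (hx0 : ∀ v, 0 ≤ x v) (hE : TvE N x = 0) :
    (Finset.univ.filter fun v => x v ≠ 0).card ≤ 2 := by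
  by_contra hc
  push_neg at hc
  obtain ⟨a, b, c, ha, hb, hc', hab, hac, hbc⟩ := Finset.two_lt_card_iff.mp hc
  simp only [Finset.mem_filter, Finset.mem_univ, true_and] at ha hb hc'
  -- reduce to a sorted triple
  have key : ∀ u v w : Fin (N+1), u < v → v < w →
      x u ≠ 0 → x v ≠ 0 → x w ≠ 0 → False := by
    intro u v w huv hvw hu hv hw
    have hupos : 0 < x u := lt_of_le_of_ne (hx0 u) (Ne.symm hu)
    have hvpos : 0 < x v := lt_of_le_of_ne (hx0 v) (Ne.symm hv)
    have hwpos : 0 < x w := lt_of_le_of_ne (hx0 w) (Ne.symm hw)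
    have hterm : ∀ p q t : Fin (N+1),
        0 ≤ (if p < q ∧ q < t then x p * x q * x t else 0) := by
      intro p q t
      split_ifs
      · exact mul_nonneg (mul_nonneg (hx0 p) (hx0 q)) (hx0 t)
      · exact le_refl 0
    have h3 : (if u < v ∧ v < w then x u * x v * x w else 0) ≤
        ∑ t, (if u < v ∧ v < t then x u * x v * x t else 0) :=
      Finset.single_le_sum (fun t _ => hterm u v t) (Finset.mem_univ w)
    have h2 : (∑ t, (if u < v ∧ v < t then x u * x v * x t else 0)) ≤
        ∑ q, ∑ t, (if u < q ∧ q < t then x u * x q * x t else 0) :=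
      Finset.single_le_sum
        (fun q _ => Finset.sum_nonneg fun t _ => hterm u q t) (Finset.mem_univ v)
    have h1 : (∑ q, ∑ t, (if u < q ∧ q < t then x u * x q * x t else 0)) ≤ TvE N x :=
      Finset.single_le_sum
        (fun p _ => Finset.sum_nonneg fun q _ => Finset.sum_nonneg fun t _ => hterm p q t)
        (Finset.mem_univ u)
    have hcond : u < v ∧ v < w := ⟨huv, hvw⟩
    have hpos : 0 < x u * x v * x w := mul_pos (mul_pos hupos hvpos) hwpos
    rw [if_pos hcond] at h3
    nlinarith [h3.trans (h2.trans h1)]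
  rcases lt_trichotomy a b with h1 | h1 | h1
  · rcases lt_trichotomy b c with h2 | h2 | h2
    · exact key a b c h1 h2 ha hb hc'
    · exact hbc h2
    · rcases lt_trichotomy a c with h3 | h3 | h3
      · exact key a c b h3 h2 ha hc' hb
      · exact hac h3
      · exact key c a b h3 h1 hc' ha hb
  · exact hab h1
  · rcases lt_trichotomy a c with h2 | h2 | h2
    · exact key b a c h1 h2 hb ha hc'
    · exact hac h2
    · rcases lt_trichotomy b c with h3 | h3 | h3
      · exact key b c a h3 h2 hb hc' ha
      · exact hbc h3
      · exact key c b a h3 h1 hc' hb ha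


/-- The main computation on an edge: values of `TvG` and `TvH` for a point supported on
`{a, b}` with `a < b`. -/
lemma Tv_edge {N : ℕ} {x : Fin (N+1) → ℝ} (hx0 : ∀ v, 0 ≤ x v) (hx1 : ∑ v, x v = 1)
    {a b : Fin (N+1)} (hab : a < b) (hs : ∀ v, v ≠ a → v ≠ b → x v = 0) :
    0 ≤ TvG N x - ((a:ℕ):ℝ) ∧ 0 ≤ ((b:ℕ):ℝ) - TvG N x ∧
    TvH N x = (TvB N)^(TvCode N a b) * ((TvG N x - ((a:ℕ):ℝ)) * (((b:ℕ):ℝ) - TvG N x)) := by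
  have hne : a ≠ b := hab.ne
  have hpq : x a + x b = 1 := by
    have hsub : ∑ v ∈ ({a,b} : Finset (Fin (N+1))), x v = ∑ v, x v := by
      refine Finset.sum_subset (Finset.subset_univ _) fun v _ hv => ?_
      simp only [Finset.mem_insert, Finset.mem_singleton] at hv
      push_neg at hv
      exact hs v hv.1 hv.2
    rw [Finset.sum_pair hne] at hsub
    rw [hsub, hx1]
  have hG : TvG N x = ((a:ℕ):ℝ) * x a + ((b:ℕ):ℝ) * x b := by
    have hsub : ∑ v ∈ ({a,b} : Finset (Fin (N+1))), ((v:ℕ):ℝ) * x v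
        = ∑ v : Fin (N+1), ((v:ℕ):ℝ) * x v := by
      refine Finset.sum_subset (Finset.subset_univ _) fun v _ hv => ?_
      simp only [Finset.mem_insert, Finset.mem_singleton] at hv
      push_neg at hv
      rw [hs v hv.1 hv.2, mul_zero]
    rw [Finset.sum_pair hne] at hsub
    rw [TvG, ← hsub]
  have hcast : ((a:ℕ):ℝ) ≤ ((b:ℕ):ℝ) := by
    exact_mod_cast Nat.le_of_lt hab
  have h1 : TvG N x - ((a:ℕ):ℝ) = (((b:ℕ):ℝ) - ((a:ℕ):ℝ)) * x b := by
    linear_combination hG + ((a:ℕ):ℝ) * hpq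
  have h2 : ((b:ℕ):ℝ) - TvG N x = (((b:ℕ):ℝ) - ((a:ℕ):ℝ)) * x a := by
    linear_combination - hG - ((b:ℕ):ℝ) * hpq
  refine ⟨by rw [h1]; exact mul_nonneg (by linarith) (hx0 b),
          by rw [h2]; exact mul_nonneg (by linarith) (hx0 a), ?_⟩
  have hH : TvH N x =
      (((b:ℕ):ℝ) - ((a:ℕ):ℝ))^2 * (TvB N)^(TvCode N a b) * (x a * x b) := by
    rw [TvH]
    rw [Finset.sum_eq_single_of_mem a (Finset.mem_univ a)]
    · rw [Finset.sum_eq_single_of_mem b (Finset.mem_univ b)]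
      · rw [if_pos hab]
      · intro v _ hv
        split_ifs with hlt
        · rw [hs v hlt.ne' hv, mul_zero, mul_zero]
        · rfl
    · intro u _ hu
      refine Finset.sum_eq_zero fun v _ => ?_
      split_ifs with hlt
      · rcases eq_or_ne u b with rfl | hub
        · rw [hs v (hab.trans hlt).ne' hlt.ne', mul_zero, mul_zero]
        · rw [hs u hu hub, zero_mul, mul_zero]
      · rfl
  rw [hH, h1, h2]
  ring

/-- If two weighted products are equal with strictly bigger weight on the left,
the common point is within 1/2 of one of the two left endpoints. -/
lemma Tv_near {N : ℕ} {X : ℝ} {a b a' b' : Fin (N+1)} {k k' : ℕ} (hkk : k' < k)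
    (hA : 0 ≤ X - ((a:ℕ):ℝ)) (hB : 0 ≤ ((b:ℕ):ℝ) - X)
    (hA' : 0 ≤ X - ((a':ℕ):ℝ)) (hB' : 0 ≤ ((b':ℕ):ℝ) - X)
    (hY : (TvB N)^k * ((X - ((a:ℕ):ℝ)) * (((b:ℕ):ℝ) - X))
        = (TvB N)^k' * ((X - ((a':ℕ):ℝ)) * (((b':ℕ):ℝ) - X))) :
    ∃ m : Fin (N+1), (m = a ∨ m = b) ∧ |X - ((m:ℕ):ℝ)| < 1/2 := by
  set B := TvB N with hBdef
  have hB1 : 1 ≤ B := TvB_one_le N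
  have hBpos : 0 < B := TvB_pos N
  have hBgt : ((N:ℝ))^2 < B := TvB_gt N
  set P := (X - ((a:ℕ):ℝ)) * (((b:ℕ):ℝ) - X) with hPdef
  set P' := (X - ((a':ℕ):ℝ)) * (((b':ℕ):ℝ) - X) with hP'def
  have hP : 0 ≤ P := mul_nonneg hA hB
  have hP' : 0 ≤ P' := mul_nonneg hA' hB'
  have hble : ((b':ℕ):ℝ) ≤ (N:ℝ) := by exact_mod_cast Fin.is_le b'
  have ha0 : (0:ℝ) ≤ ((a':ℕ):ℝ) := Nat.cast_nonneg _
  have hP'le : P' ≤ ((N:ℝ))^2 / 4 := by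
    rw [hP'def]
    nlinarith [sq_nonneg ((X - ((a':ℕ):ℝ)) - (((b':ℕ):ℝ) - X))]
  have hpow : B^(k'+1) ≤ B^k := pow_le_pow_right₀ hB1 hkk
  have hchain : B^k' * (B * P) ≤ B^k' * P' := by
    calc B^k' * (B * P) = B^(k'+1) * P := by ring
    _ ≤ B^k * P := mul_le_mul_of_nonneg_right hpow hP
    _ = B^k' * P' := hY
  have hBP : B * P ≤ P' := le_of_mul_le_mul_left hchain (pow_pos hBpos k')
  have hPlt : P < 1/4 := by nlinarith
  by_cases hc : X - ((a:ℕ):ℝ) < 1/2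
  · exact ⟨a, Or.inl rfl, by rw [abs_of_nonneg hA]; exact hc⟩
  · push_neg at hc
    have hb2 : ((b:ℕ):ℝ) - X < 1/2 := by nlinarith
    refine ⟨b, Or.inr rfl, ?_⟩
    rw [abs_sub_comm, abs_of_nonneg hB]
    exact hb2

/-- Two vertices within 1/2 of the same real number coincide. -/
lemma Tv_clash {N : ℕ} {X : ℝ} {m m' : Fin (N+1)} (h : |X - ((m:ℕ):ℝ)| < 1/2)
    (h' : |X - ((m':ℕ):ℝ)| < 1/2) : m = m' := by
  rw [abs_lt] at h h'
  apply Fin.ext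
  by_contra hne
  rcases Nat.lt_or_ge (m:ℕ) (m':ℕ) with hlt | hge
  · have : ((m:ℕ):ℝ) + 1 ≤ ((m':ℕ):ℝ) := by exact_mod_cast Nat.succ_le_of_lt hlt
    linarith [h.1, h.2, h'.1, h'.2]
  · have hlt' : (m':ℕ) < (m:ℕ) := by omega
    have : ((m':ℕ):ℝ) + 1 ≤ ((m:ℕ):ℝ) := by exact_mod_cast Nat.succ_le_of_lt hlt'
    linarith [h.1, h.2, h'.1, h'.2]

/-- From a point of the simplex with at most two-element support inside `S` (with
`2 ≤ S.card`), extract an ordered pair of vertices of `S` carrying the support. -/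
lemma Tv_extract {N : ℕ} {x : Fin (N+1) → ℝ} (hx0 : ∀ v, 0 ≤ x v)
    (hE : TvE N x = 0) {S : Finset (Fin (N+1))} (hS : 2 ≤ S.card)
    (hsupp : ∀ v, x v ≠ 0 → v ∈ S) :
    ∃ a b : Fin (N+1), a < b ∧ a ∈ S ∧ b ∈ S ∧ ∀ v, v ≠ a → v ≠ b → x v = 0 := by
  classical
  have hF : (Finset.univ.filter fun v => x v ≠ 0) ⊆ S :=
    fun v hv => hsupp v (Finset.mem_filter.mp hv).2
  have hFc := TvE_supp hx0 hE
  obtain ⟨T, hFT, hTS, hTcard⟩ := Finset.exists_subsuperset_card_eq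
    (n := 2) hF hFc hS
  have hT2 : T.card = 2 := by omega
  obtain ⟨a, b, hne, rfl⟩ := Finset.card_eq_two.mp hT2
  have hzero : ∀ v, v ≠ a → v ≠ b → x v = 0 := by
    intro v h1 h2
    by_contra h
    have := hFT (Finset.mem_filter.mpr ⟨Finset.mem_univ v, h⟩)
    simp only [Finset.mem_insert, Finset.mem_singleton] at this
    tauto
  have haS : a ∈ S := hTS (by simp)
  have hbS : b ∈ S := hTS (by simp)
  rcases hne.lt_or_gt with h | h
  · exact ⟨a, b, h, haS, hbS, hzero⟩
  · exact ⟨b, a, h, hbS, haS, fun v h1 h2 => hzero v h2 h1⟩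

theorem not_prescribable_one_two_threes (r : ℕ) (hr : 3 ≤ r) (N : ℕ) :
    ∃ f : (stdSimplex ℝ (Fin (N + 1))) → (Fin 3 → ℝ), Continuous f ∧
      ¬ ∃ S : Fin r → Finset (Fin (N + 1)),
          (Pairwise fun i j => Disjoint (S i) (S j)) ∧
          (∀ i : Fin r,
            (S i).card = if (i : ℕ) = 0 then 2 else if (i : ℕ) = 1 then 3 else 4) ∧
          ∃ x : Fin r → stdSimplex ℝ (Fin (N + 1)),
            (∀ i, ∀ v : Fin (N + 1), (x i : Fin (N + 1) → ℝ) v ≠ 0 → v ∈ S i) ∧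
            (∀ i j, f (x i) = f (x j)) := by
  classical
  refine ⟨fun x j => if (j:ℕ) = 0 then TvG N x.1 else if (j:ℕ) = 1 then TvH N x.1
    else TvE N x.1, ?_, ?_⟩
  · apply continuous_pi
    intro j
    by_cases h0 : (j:ℕ) = 0
    · simpa [h0] using TvG_cont N
    · by_cases h1 : (j:ℕ) = 1
      · simpa [h1, h0] using TvH_cont N
      · simpa [h0, h1] using TvE_cont N
  · rintro ⟨S, hdisj, hcard, x, hsupp, heq⟩
    have h0r : 0 < r := by omega
    have h1r : 1 < r := by omega
    have h2r : 2 < r := by omega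
    set i0 : Fin r := ⟨0, h0r⟩ with hi0
    set i1 : Fin r := ⟨1, h1r⟩ with hi1
    set i2 : Fin r := ⟨2, h2r⟩ with hi2
    have hne01 : i0 ≠ i1 := by rw [hi0, hi1]; intro h; simpa using congrArg Fin.val h
    have hne02 : i0 ≠ i2 := by rw [hi0, hi2]; intro h; simpa using congrArg Fin.val h
    have hne12 : i1 ≠ i2 := by rw [hi1, hi2]; intro h; simpa using congrArg Fin.val h
    have hc0 : (S i0).card = 2 := by
      have := hcard i0; rw [hi0] at this; simpa using this
    have hc1 : (S i1).card = 3 := by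
      have := hcard i1; rw [hi1] at this; simpa using this
    have hc2 : (S i2).card = 4 := by
      have := hcard i2; rw [hi2] at this; simpa using this
    -- coordinatewise equalities
    have hfG : ∀ i j : Fin r, TvG N (x i).1 = TvG N (x j).1 := by
      intro i j
      have := congrFun (heq i j) ⟨0, by norm_num⟩
      simpa using this
    have hfH : ∀ i j : Fin r, TvH N (x i).1 = TvH N (x j).1 := by
      intro i j
      have := congrFun (heq i j) ⟨1, by norm_num⟩
      simpa using this
    have hfE : ∀ i j : Fin r, TvE N (x i).1 = TvE N (x j).1 := by
      intro i j
      have := congrFun (heq i j) ⟨2, by norm_num⟩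
      simpa using this
    -- E vanishes on all three points
    have hE0 : TvE N (x i0).1 = 0 := TvE_zero (hsupp i0) (le_of_eq hc0)
    have hE1 : TvE N (x i1).1 = 0 := by rw [hfE i1 i0]; exact hE0
    have hE2 : TvE N (x i2).1 = 0 := by rw [hfE i2 i0]; exact hE0
    -- extract supporting pairs
    obtain ⟨a0, b0, hab0, ha0S, hb0S, hz0⟩ :=
      Tv_extract (x i0).2.1 hE0 (by omega) (hsupp i0)
    obtain ⟨a1, b1, hab1, ha1S, hb1S, hz1⟩ :=
      Tv_extract (x i1).2.1 hE1 (by omega) (hsupp i1)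
    obtain ⟨a2, b2, hab2, ha2S, hb2S, hz2⟩ :=
      Tv_extract (x i2).2.1 hE2 (by omega) (hsupp i2)
    obtain ⟨hA0, hB0, hH0⟩ := Tv_edge (x i0).2.1 (x i0).2.2 hab0 hz0
    obtain ⟨hA1, hB1, hH1⟩ := Tv_edge (x i1).2.1 (x i1).2.2 hab1 hz1
    obtain ⟨hA2, hB2, hH2⟩ := Tv_edge (x i2).2.1 (x i2).2.2 hab2 hz2
    set X := TvG N (x i0).1 with hX
    have hX1 : TvG N (x i1).1 = X := hfG i1 i0
    have hX2 : TvG N (x i2).1 = X := hfG i2 i0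
    rw [hX1] at hA1 hB1 hH1
    rw [hX2] at hA2 hB2 hH2
    set k0 := TvCode N a0 b0 with hk0
    set k1 := TvCode N a1 b1 with hk1
    set k2 := TvCode N a2 b2 with hk2
    -- the three weights are pairwise distinct
    have hkd : ∀ {i j : Fin r} {a b a' b' : Fin (N+1)}, i ≠ j → a ∈ S i → a' ∈ S j →
        TvCode N a b = TvCode N a' b' → False := by
      intro i j a b a' b' hij ha ha' h
      obtain ⟨h1, _⟩ := TvCode_inj h
      exact (Finset.disjoint_left.mp (hdisj hij) ha) (h1 ▸ ha')
    have hk01 : k0 ≠ k1 := fun h => hkd hne01 ha0S ha1S h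
    have hk02 : k0 ≠ k2 := fun h => hkd hne02 ha0S ha2S h
    have hk12 : k1 ≠ k2 := fun h => hkd hne12 ha1S ha2S h
    -- common H-value equalities
    have hY0 : TvH N (x i0).1 = (TvB N)^k0 * ((X - ((a0:ℕ):ℝ)) * (((b0:ℕ):ℝ) - X)) := hH0
    have hY1 : TvH N (x i0).1 = (TvB N)^k1 * ((X - ((a1:ℕ):ℝ)) * (((b1:ℕ):ℝ) - X)) := by
      rw [hfH i0 i1]; exact hH1
    have hY2 : TvH N (x i0).1 = (TvB N)^k2 * ((X - ((a2:ℕ):ℝ)) * (((b2:ℕ):ℝ) - X)) := by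
      rw [hfH i0 i2]; exact hH2
    -- final clash machinery
    have DONE : ∀ (i j : Fin r), i ≠ j → ∀ m m' : Fin (N+1), m ∈ S i → m' ∈ S j →
        |X - ((m:ℕ):ℝ)| < 1/2 → |X - ((m':ℕ):ℝ)| < 1/2 → False := by
      intro i j hij m m' hm hm' h1 h2
      have hmm : m = m' := Tv_clash h1 h2
      exact (Finset.disjoint_left.mp (hdisj hij) hm) (hmm ▸ hm')
    have mem0 : ∀ m : Fin (N+1), (m = a0 ∨ m = b0) → m ∈ S i0 := by
      rintro m (rfl | rfl) <;> assumption
    have mem1 : ∀ m : Fin (N+1), (m = a1 ∨ m = b1) → m ∈ S i1 := by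
      rintro m (rfl | rfl) <;> assumption
    have mem2 : ∀ m : Fin (N+1), (m = a2 ∨ m = b2) → m ∈ S i2 := by
      rintro m (rfl | rfl) <;> assumption
    rcases Nat.lt_trichotomy k0 k1 with h01 | h01 | h01
    · rcases Nat.lt_trichotomy k1 k2 with h12 | h12 | h12
      · -- k0 < k1 < k2
        obtain ⟨m, hm, hmX⟩ := Tv_near h12 hA2 hB2 hA1 hB1 (hY2.symm.trans hY1)
        obtain ⟨m', hm', hmX'⟩ := Tv_near h01 hA1 hB1 hA0 hB0 (hY1.symm.trans hY0)
        exact DONE i2 i1 hne12.symm m m' (mem2 m hm) (mem1 m' hm') hmX hmX'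
      · exact hk12 h12
      · rcases Nat.lt_trichotomy k0 k2 with h02 | h02 | h02
        · -- k1 > k2 > k0
          obtain ⟨m, hm, hmX⟩ := Tv_near h12 hA1 hB1 hA2 hB2 (hY1.symm.trans hY2)
          obtain ⟨m', hm', hmX'⟩ := Tv_near h02 hA2 hB2 hA0 hB0 (hY2.symm.trans hY0)
          exact DONE i1 i2 hne12 m m' (mem1 m hm) (mem2 m' hm') hmX hmX'
        · exact hk02 h02
        · -- k1 > k0 > k2
          obtain ⟨m, hm, hmX⟩ := Tv_near h01 hA1 hB1 hA0 hB0 (hY1.symm.trans hY0)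
          obtain ⟨m', hm', hmX'⟩ := Tv_near h02 hA0 hB0 hA2 hB2 (hY0.symm.trans hY2)
          exact DONE i1 i0 hne01.symm m m' (mem1 m hm) (mem0 m' hm') hmX hmX'
    · exact hk01 h01
    · rcases Nat.lt_trichotomy k0 k2 with h02 | h02 | h02
      · -- k2 > k0 > k1
        obtain ⟨m, hm, hmX⟩ := Tv_near h02 hA2 hB2 hA0 hB0 (hY2.symm.trans hY0)
        obtain ⟨m', hm', hmX'⟩ := Tv_near h01 hA0 hB0 hA1 hB1 (hY0.symm.trans hY1)
        exact DONE i2 i0 hne02.symm m m' (mem2 m hm) (mem0 m' hm') hmX hmX'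
      · exact hk02 h02
      · rcases Nat.lt_trichotomy k1 k2 with h12 | h12 | h12
        · -- k0 > k2 > k1
          obtain ⟨m, hm, hmX⟩ := Tv_near h02 hA0 hB0 hA2 hB2 (hY0.symm.trans hY2)
          obtain ⟨m', hm', hmX'⟩ := Tv_near h12 hA2 hB2 hA1 hB1 (hY2.symm.trans hY1)
          exact DONE i0 i2 hne02 m m' (mem0 m hm) (mem2 m' hm') hmX hmX'
        · exact hk12 h12
        · -- k0 > k1 > k2
          obtain ⟨m, hm, hmX⟩ := Tv_near h01 hA0 hB0 hA1 hB1 (hY0.symm.trans hY1)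
          obtain ⟨m', hm', hmX'⟩ := Tv_near h12 hA1 hB1 hA2 hB2 (hY1.symm.trans hY2)
          exact DONE i0 i1 hne01 m m' (mem0 m hm) (mem1 m' hm') hmX hmX'

end
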